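/- arXiv:1105.1880 — 9 statements merged into one kernel-verified Lean document; each statement's English description precedes it below -/
import Mathlib

section
/- Let E, F be Banach spaces, U ⊆ E open, g : U → F a C¹ map, and y₀ ∈ F a regular value of g (i.e., at every point x of S = g⁻¹(y₀), the differential g'(x) is surjective and its kernel splits E). Let f : U → ℝ be C¹. If x ∈ S is a local extremum of the restriction f|_S, then the kernel of g'(x) is contained in the kernel of f'(x) (i.e., f'(x)h = 0 for every h with g'(x)h = 0). -/
/-- If `y₀` is a regular value of a `C¹` map `g : U → F` between Banach
spaces and `x ∈ S = g⁻¹(y₀)` is a local extremum of `f|_S` for a `C¹` functional `f`,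
then `ker g'(x) ⊆ ker f'(x)`. -/
theorem critical_point_kernel_inclusion
    {E F : Type*} [NormedAddCommGroup E] [NormedSpace ℝ E] [CompleteSpace E]
    [NormedAddCommGroup F] [NormedSpace ℝ F] [CompleteSpace F]
    {U : Set E} (hU : IsOpen U) {g : E → F} {f : E → ℝ} {y₀ : F}
    (hg : ContDiffOn ℝ 1 g U) (hf : ContDiffOn ℝ 1 f U)
    (hreg : ∀ z ∈ U, g z = y₀ →
      Function.Surjective (fderiv ℝ g z) ∧
      (LinearMap.ker (fderiv ℝ g z : E →ₗ[ℝ] F)).ClosedComplemented)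
    {x : E} (hxU : x ∈ U) (hxS : g x = y₀)
    (hext : IsLocalExtrOn f (U ∩ g ⁻¹' {y₀}) x) :
    ∀ h : E, fderiv ℝ g x h = 0 → fderiv ℝ f x h = 0 := by
  intro h hgh
  have hUx : U ∈ nhds x := hU.mem_nhds hxU
  have hg' : HasStrictFDerivAt g (fderiv ℝ g x) x :=
    ((hg.contDiffAt (hU.mem_nhds hxU)).hasStrictFDerivAt one_ne_zero)
  have hf' : HasStrictFDerivAt f (fderiv ℝ f x) x :=
    ((hf.contDiffAt (hU.mem_nhds hxU)).hasStrictFDerivAt one_ne_zero)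
  have hext' : IsLocalExtrOn f {z | g z = g x} x := by
    have : g ⁻¹' {y₀} = {z | g z = g x} := by
      ext z; simp [hxS]
    apply hext.filter_mono
    rw [← this]
    rw [nhdsWithin_inter_of_mem (mem_nhdsWithin_of_mem_nhds hUx)]
  have hne := hext'.range_ne_top_of_hasStrictFDerivAt hg' hf'
  by_contra hfh
  apply hne
  rw [LinearMap.range_eq_top]
  rintro ⟨y, t⟩
  obtain ⟨z, hz⟩ := (hreg x hxU hxS).1 y
  refine ⟨z + ((t - fderiv ℝ f x z) / fderiv ℝ f x h) • h, ?_⟩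
  simp only [ContinuousLinearMap.coe_coe, ContinuousLinearMap.prod_apply, map_add, map_smul, hz, hgh, smul_eq_mul,
    Prod.mk.injEq, Prod.smul_mk, Prod.mk_add_mk, smul_zero, add_zero]
  field_simp
  simp
end

section
/- Let E be a Hilbert space, F a Banach space, U ⊆ E open, g : U → F a C¹ map with regular value y₀, S = g⁻¹(y₀), and f : U → ℝ a C¹ functional. Suppose x ∈ S is a local extremum of f|_S and f'(x) ≠ 0. Then there exists a nonzero vector e ∈ E orthogonal to the kernel of g'(x) and orthogonal to the kernel of f'(x). -/
open scoped RealInnerProductSpace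

/-- If `E` is a Hilbert space, `y₀` a regular value of a `C¹` map `g`,
`x ∈ S = g⁻¹(y₀)` a local extremum of `f|_S` with `f'(x) ≠ 0`, then there is a nonzero
vector `e` orthogonal both to `ker g'(x)` and to `ker f'(x)`. -/
theorem critical_point_orthogonal_vector
    {E F : Type*} [NormedAddCommGroup E] [InnerProductSpace ℝ E] [CompleteSpace E]
    [NormedAddCommGroup F] [NormedSpace ℝ F] [CompleteSpace F]
    {U : Set E} (hU : IsOpen U) {g : E → F} {f : E → ℝ} {y₀ : F}
    (hg : ContDiffOn ℝ 1 g U) (hf : ContDiffOn ℝ 1 f U)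
    (hreg : ∀ z ∈ U, g z = y₀ →
      Function.Surjective (fderiv ℝ g z) ∧
      (LinearMap.ker (fderiv ℝ g z : E →ₗ[ℝ] F)).ClosedComplemented)
    {x : E} (hxU : x ∈ U) (hxS : g x = y₀)
    (hext : IsLocalExtrOn f (U ∩ g ⁻¹' {y₀}) x)
    (hf' : fderiv ℝ f x ≠ 0) :
    ∃ e : E, e ≠ 0 ∧
      (∀ h : E, fderiv ℝ g x h = 0 → ⟪e, h⟫ = 0) ∧
      (∀ h : E, fderiv ℝ f x h = 0 → ⟪e, h⟫ = 0) := by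
  have hUx : U ∈ nhds x := hU.mem_nhds hxU
  have hgd : HasStrictFDerivAt g (fderiv ℝ g x) x :=
    ((hg.contDiffAt hUx).hasStrictFDerivAt one_ne_zero)
  have hfd : HasStrictFDerivAt f (fderiv ℝ f x) x :=
    ((hf.contDiffAt hUx).hasStrictFDerivAt one_ne_zero)
  have hextr : IsLocalExtrOn f {y | g y = g x} x := by
    have hset : {y | g y = g x} = g ⁻¹' {y₀} := by
      ext y; simp [hxS]
    rw [hset]
    have hnhds : nhdsWithin x (U ∩ g ⁻¹' {y₀}) = nhdsWithin x (g ⁻¹' {y₀}) :=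
      nhdsWithin_inter_of_mem (mem_nhdsWithin_of_mem_nhds hUx)
    unfold IsLocalExtrOn at hext ⊢
    rwa [hnhds] at hext
  obtain ⟨Λ, Λ₀, hΛ, hΛeq⟩ := hextr.exists_linear_map_of_hasStrictFDerivAt hgd hfd
  have hΛ₀ : Λ₀ ≠ 0 := by
    intro h0
    subst h0
    have hΛne : Λ ≠ 0 := by
      intro h; apply hΛ; simp [h]
    have hsurj := (hreg x hxU hxS).1
    apply hΛne
    ext v
    obtain ⟨w, rfl⟩ := hsurj v
    simpa using hΛeq w
  set e : E := Λ₀ • (InnerProductSpace.toDual ℝ E).symm (fderiv ℝ f x) with he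
  have hinner : ∀ h : E, ⟪e, h⟫ = Λ₀ * fderiv ℝ f x h := by
    intro h
    rw [he, real_inner_smul_left]
    congr 1
    exact InnerProductSpace.toDual_symm_apply
  refine ⟨e, ?_, ?_, ?_⟩
  · rw [he]
    simp only [ne_eq, smul_eq_zero, hΛ₀, false_or]
    rw [LinearIsometryEquiv.map_eq_zero_iff]
    exact hf'
  · intro h hh
    rw [hinner]
    have := hΛeq h
    rw [hh] at this
    simp only [map_zero, zero_add, smul_eq_mul] at this
    exact this
  · intro h hh
    rw [hinner, hh, mul_zero]
end

section
/- Let A ∈ B(E,F) be a double split operator between Banach spaces, and let A⁺₀ be a generalized inverse of A with associated decompositions E = N(A) ⊕ R₀⁺ and F = R(A) ⊕ N₀⁺, where R₀⁺ = R(A⁺₀) and N₀⁺ = N(A⁺₀). For bounded linear operators α : R₀⁺ → N(A) and β : N₀⁺ → R(A), define M(α,β) = (I_E + α)∘A⁺₀∘(I_F − β∘P), where P is the projection of F onto N₀⁺ along R(A). Then M(α,β) is a generalized inverse of A. -/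
/-- Given a double split `A` with generalized inverse `A⁺₀`, and operators
`α : R₀⁺ → N(A)`, `β : N₀⁺ → R(A)` (extended by zero to all of `E` resp. `F`), the
operator `M(α,β) = (I_E + α) A⁺₀ (I_F − β P)` (with `P = I_F − A A⁺₀` the projection
onto `N₀⁺` along `R(A)`) is a generalized inverse of `A`. -/
theorem M_is_generalized_inverse
    {E F : Type*} [NormedAddCommGroup E] [NormedSpace ℝ E] [CompleteSpace E]
    [NormedAddCommGroup F] [NormedSpace ℝ F] [CompleteSpace F]
    (A : E →L[ℝ] F) (A0 : F →L[ℝ] E)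
    (hsplit : IsClosed (LinearMap.range (A : E →ₗ[ℝ] F) : Set F) ∧
      (LinearMap.ker (A : E →ₗ[ℝ] F)).ClosedComplemented ∧ (LinearMap.range (A : E →ₗ[ℝ] F)).ClosedComplemented)
    (h1 : A ∘L A0 ∘L A = A) (h2 : A0 ∘L A ∘L A0 = A0)
    (α : E →L[ℝ] E)
    (hα1 : α ∘L (A0 ∘L A) = α)        -- α is determined by its values on R₀⁺ = R(A⁺₀)
    (hα2 : A ∘L α = 0)                  -- α maps into N(A)
    (β : F →L[ℝ] F)
    (hβ1 : β ∘L (A ∘L A0) = 0)        -- β vanishes on R(A), i.e. lives on N₀⁺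
    (hβ2 : (A ∘L A0) ∘L β = β) :       -- β maps into R(A)
    letI P : F →L[ℝ] F := ContinuousLinearMap.id ℝ F - A ∘L A0
    letI B : F →L[ℝ] E :=
      ((ContinuousLinearMap.id ℝ E + α) ∘L A0) ∘L (ContinuousLinearMap.id ℝ F - β ∘L P)
    A ∘L B ∘L A = A ∧ B ∘L A ∘L B = B := by
  have h1' : ∀ x, A (A0 (A x)) = A x := fun x => congrFun (congrArg DFunLike.coe h1) x
  have h2' : ∀ y, A0 (A (A0 y)) = A0 y := fun y => congrFun (congrArg DFunLike.coe h2) y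
  have hα2' : ∀ x, A (α x) = 0 := fun x => congrFun (congrArg DFunLike.coe hα2) x
  have hβ1' : ∀ y, β (A (A0 y)) = 0 := fun y => congrFun (congrArg DFunLike.coe hβ1) y
  constructor
  · ext x
    simp [h1', hα2', hβ1']
  · ext y
    simp [h1', h2', hα2', hβ1', map_sub]
end

section
/- With notation as in the construction M(α,β) = (I_E + α) A⁺₀ (I_F − β P_{N₀⁺}^{R(A)}): the range of B = M(α,β) equals { e + α(e) : e ∈ R₀⁺ }, the graph of α over R₀⁺. -/
/-- With `B = M(α,β) = (I_E + α) A⁺₀ (I_F − β P_{N₀⁺}^{R(A)})`, the range of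
`B` is the graph of `α` over `R₀⁺ = R(A⁺₀)`, i.e. `R(B) = { e + α e : e ∈ R₀⁺ }`. -/
theorem range_M_eq_graph
    {E F : Type*} [NormedAddCommGroup E] [NormedSpace ℝ E] [CompleteSpace E]
    [NormedAddCommGroup F] [NormedSpace ℝ F] [CompleteSpace F]
    (A : E →L[ℝ] F) (A0 : F →L[ℝ] E)
    (hsplit : IsClosed (LinearMap.range (A : E →ₗ[ℝ] F) : Set F) ∧
      (LinearMap.ker (A : E →ₗ[ℝ] F)).ClosedComplemented ∧ (LinearMap.range (A : E →ₗ[ℝ] F)).ClosedComplemented)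
    (h1 : A ∘L A0 ∘L A = A) (h2 : A0 ∘L A ∘L A0 = A0)
    (α : E →L[ℝ] E) (hα1 : α ∘L (A0 ∘L A) = α) (hα2 : A ∘L α = 0)
    (β : F →L[ℝ] F) (hβ1 : β ∘L (A ∘L A0) = 0) (hβ2 : (A ∘L A0) ∘L β = β) :
    letI P : F →L[ℝ] F := ContinuousLinearMap.id ℝ F - A ∘L A0
    letI B : F →L[ℝ] E :=
      ((ContinuousLinearMap.id ℝ E + α) ∘L A0) ∘L (ContinuousLinearMap.id ℝ F - β ∘L P)
    (LinearMap.range (B : F →ₗ[ℝ] E) : Set E) = {x : E | ∃ e ∈ LinearMap.range (A0 : F →ₗ[ℝ] E), x = e + α e} := by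
  ext x
  simp only [SetLike.mem_coe, LinearMap.mem_range, Set.mem_setOf_eq,
    ContinuousLinearMap.coe_coe]
  constructor
  · rintro ⟨f, rfl⟩
    refine ⟨A0 ((ContinuousLinearMap.id ℝ F -
        β ∘L (ContinuousLinearMap.id ℝ F - A ∘L A0)) f), ⟨_, rfl⟩, ?_⟩
    simp [ContinuousLinearMap.comp_apply, ContinuousLinearMap.add_apply,
      ContinuousLinearMap.sub_apply]
    abel
  · rintro ⟨e, ⟨y, rfl⟩, rfl⟩
    refine ⟨A (A0 y), ?_⟩
    have h2' : A0 (A (A0 y)) = A0 y := by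
      have := DFunLike.congr_fun h2 y
      simpa [ContinuousLinearMap.comp_apply] using this
    have hb' : β (A (A0 y)) = 0 := by
      have := DFunLike.congr_fun hβ1 y
      simpa [ContinuousLinearMap.comp_apply] using this
    simp [ContinuousLinearMap.comp_apply, ContinuousLinearMap.add_apply,
      ContinuousLinearMap.sub_apply, h2', hb']
end

section
/- With notation as in the construction M(α,β) = (I_E + α) A⁺₀ (I_F − β P_{N₀⁺}^{R(A)}): the null space of B = M(α,β) equals { d + β(d) : d ∈ N₀⁺ }, the graph of β over N₀⁺. -/
/-- With `B = M(α,β) = (I_E + α) A⁺₀ (I_F − β P_{N₀⁺}^{R(A)})`, the null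
space of `B` is the graph of `β` over `N₀⁺ = N(A⁺₀)`, i.e. `N(B) = { d + β d : d ∈ N₀⁺ }`. -/
theorem ker_M_eq_graph
    {E F : Type*} [NormedAddCommGroup E] [NormedSpace ℝ E] [CompleteSpace E]
    [NormedAddCommGroup F] [NormedSpace ℝ F] [CompleteSpace F]
    (A : E →L[ℝ] F) (A0 : F →L[ℝ] E)
    (hsplit : IsClosed (LinearMap.range (A : E →ₗ[ℝ] F) : Set F) ∧
      (LinearMap.ker (A : E →ₗ[ℝ] F)).ClosedComplemented ∧ (LinearMap.range (A : E →ₗ[ℝ] F)).ClosedComplemented)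
    (h1 : A ∘L A0 ∘L A = A) (h2 : A0 ∘L A ∘L A0 = A0)
    (α : E →L[ℝ] E) (hα1 : α ∘L (A0 ∘L A) = α) (hα2 : A ∘L α = 0)
    (β : F →L[ℝ] F) (hβ1 : β ∘L (A ∘L A0) = 0) (hβ2 : (A ∘L A0) ∘L β = β) :
    letI P : F →L[ℝ] F := ContinuousLinearMap.id ℝ F - A ∘L A0
    letI B : F →L[ℝ] E :=
      ((ContinuousLinearMap.id ℝ E + α) ∘L A0) ∘L (ContinuousLinearMap.id ℝ F - β ∘L P)
    (LinearMap.ker (B : F →ₗ[ℝ] E) : Set F) = {y : F | ∃ d ∈ LinearMap.ker (A0 : F →ₗ[ℝ] E), y = d + β d} := by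
  set P : F →L[ℝ] F := ContinuousLinearMap.id ℝ F - A ∘L A0 with hPdef
  set B : F →L[ℝ] E :=
    ((ContinuousLinearMap.id ℝ E + α) ∘L A0) ∘L (ContinuousLinearMap.id ℝ F - β ∘L P) with hBdef
  have hβ1' : ∀ x : F, β (A (A0 x)) = 0 := fun x => by
    simpa using ContinuousLinearMap.ext_iff.mp hβ1 x
  have hβ2' : ∀ x : F, A (A0 (β x)) = β x := fun x => by
    simpa using ContinuousLinearMap.ext_iff.mp hβ2 x
  have h2' : ∀ x : F, A0 (A (A0 x)) = A0 x := fun x => by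
    simpa using ContinuousLinearMap.ext_iff.mp h2 x
  have hα2' : ∀ x : E, A (α x) = 0 := fun x => by
    simpa using ContinuousLinearMap.ext_iff.mp hα2 x
  -- β² = 0
  have hββ : ∀ x : F, β (β x) = 0 := fun x => by
    rw [← hβ2' x, hβ1']
  -- B y = A0 (y - β y) + α (A0 (y - β y))
  have hB : ∀ y : F, B y = A0 (y - β y) + α (A0 (y - β y)) := by
    intro y
    have hP : β (P y) = β y := by
      simp only [P, ContinuousLinearMap.sub_apply, ContinuousLinearMap.comp_apply,
        ContinuousLinearMap.id_apply, map_sub, hβ1' y, sub_zero]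
    simp [B, ContinuousLinearMap.comp_apply, ContinuousLinearMap.add_apply,
      ContinuousLinearMap.sub_apply, hP]
    abel
  ext y
  simp only [SetLike.mem_coe, LinearMap.mem_ker, Set.mem_setOf_eq, ContinuousLinearMap.coe_coe]
  constructor
  · intro hy
    have hy' : B y = 0 := hy
    rw [hB y] at hy'
    -- apply A
    have hA : A (A0 (y - β y)) = 0 := by
      have := congrArg A hy'
      rw [map_add, hα2', add_zero, map_zero] at this
      exact this
    have h0 : A0 (y - β y) = 0 := by
      rw [← h2' (y - β y)]
      rw [hA, map_zero]
    refine ⟨y - β y, h0, ?_⟩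
    rw [map_sub, hββ, sub_zero]
    abel
  · rintro ⟨d, hd, rfl⟩
    show B (d + β d) = 0
    rw [hB]
    have : (d + β d) - β (d + β d) = d := by
      rw [map_add, hββ, add_zero]; abel
    rw [this, hd, map_zero, add_zero]
end

section
/- Let A ∈ B(E,F) be double split with fixed generalized inverse A⁺₀, R₀⁺ = R(A⁺₀), N₀⁺ = N(A⁺₀). Then the map M : B(R₀⁺, N(A)) × B(N₀⁺, R(A)) → GI(A) defined by M(α,β) = (I_E + α) A⁺₀ (I_F − β P_{N₀⁺}^{R(A)}) is a bijection onto the set GI(A) of all generalized inverses of A. -/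
/-- With a fixed generalized inverse `A⁺₀` of the double split operator `A`,
the map `M(α,β) = (I_E + α) A⁺₀ (I_F − β P_{N₀⁺}^{R(A)})` is a bijection from
`B(R₀⁺, N(A)) × B(N₀⁺, R(A))` (realized as the pairs of operators on `E` resp. `F`
supported on `R₀⁺` resp. `N₀⁺` with values in `N(A)` resp. `R(A)`) onto the set `GI(A)`
of all generalized inverses of `A`. -/
theorem M_bijection_onto_GI
    {E F : Type*} [NormedAddCommGroup E] [NormedSpace ℝ E] [CompleteSpace E]
    [NormedAddCommGroup F] [NormedSpace ℝ F] [CompleteSpace F]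
    (A : E →L[ℝ] F) (A0 : F →L[ℝ] E)
    (hsplit : IsClosed (LinearMap.range (A : E →ₗ[ℝ] F) : Set F) ∧
      (LinearMap.ker (A : E →ₗ[ℝ] F)).ClosedComplemented ∧ (LinearMap.range (A : E →ₗ[ℝ] F)).ClosedComplemented)
    (h1 : A ∘L A0 ∘L A = A) (h2 : A0 ∘L A ∘L A0 = A0) :
    Set.BijOn
      (fun p : (E →L[ℝ] E) × (F →L[ℝ] F) =>
        ((ContinuousLinearMap.id ℝ E + p.1) ∘L A0) ∘L
          (ContinuousLinearMap.id ℝ F - p.2 ∘L (ContinuousLinearMap.id ℝ F - A ∘L A0)))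
      {p : (E →L[ℝ] E) × (F →L[ℝ] F) |
        p.1 ∘L (A0 ∘L A) = p.1 ∧ A ∘L p.1 = 0 ∧
        p.2 ∘L (A ∘L A0) = 0 ∧ (A ∘L A0) ∘L p.2 = p.2}
      {B : F →L[ℝ] E | A ∘L B ∘L A = A ∧ B ∘L A ∘L B = B} := by
  have h1' : ∀ x, A (A0 (A x)) = A x := fun x => by
    simpa using ContinuousLinearMap.ext_iff.mp h1 x
  have h2' : ∀ x, A0 (A (A0 x)) = A0 x := fun x => by
    simpa using ContinuousLinearMap.ext_iff.mp h2 x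
  refine ⟨?_, ?_, ?_⟩
  · -- MapsTo
    rintro ⟨a, b⟩ ⟨ha1, ha2, hb1, hb2⟩
    have ha1' : ∀ x, a (A0 (A x)) = a x := fun x => by
      simpa using ContinuousLinearMap.ext_iff.mp ha1 x
    have ha2' : ∀ x, A (a x) = 0 := fun x => by
      simpa using ContinuousLinearMap.ext_iff.mp ha2 x
    have hb1' : ∀ x, b (A (A0 x)) = 0 := fun x => by
      simpa using ContinuousLinearMap.ext_iff.mp hb1 x
    have hb2' : ∀ x, A (A0 (b x)) = b x := fun x => by
      simpa using ContinuousLinearMap.ext_iff.mp hb2 x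
    constructor
    · ext x
      simp [map_sub, map_add, h1', h2', ha1', ha2', hb1', hb2']
    · ext x
      simp [map_sub, map_add, h1', h2', ha1', ha2', hb1', hb2']
  · -- InjOn
    rintro ⟨a, b⟩ ⟨ha1, ha2, hb1, hb2⟩ ⟨c, d⟩ ⟨hc1, hc2, hd1, hd2⟩ h
    simp only at h
    have ha1' : ∀ x, a (A0 (A x)) = a x := fun x => by
      simpa using ContinuousLinearMap.ext_iff.mp ha1 x
    have hc1' : ∀ x, c (A0 (A x)) = c x := fun x => by
      simpa using ContinuousLinearMap.ext_iff.mp hc1 x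
    have hb1' : ∀ x, b (A (A0 x)) = 0 := fun x => by
      simpa using ContinuousLinearMap.ext_iff.mp hb1 x
    have hd1' : ∀ x, d (A (A0 x)) = 0 := fun x => by
      simpa using ContinuousLinearMap.ext_iff.mp hd1 x
    have hb2' : ∀ x, A (A0 (b x)) = b x := fun x => by
      simpa using ContinuousLinearMap.ext_iff.mp hb2 x
    have hd2' : ∀ x, A (A0 (d x)) = d x := fun x => by
      simpa using ContinuousLinearMap.ext_iff.mp hd2 x
    have hac : a = c := by
      ext x
      have := ContinuousLinearMap.ext_iff.mp h (A x)
      simp only [ContinuousLinearMap.comp_apply, ContinuousLinearMap.sub_apply,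
        ContinuousLinearMap.add_apply, ContinuousLinearMap.id_apply, map_sub,
        h1', h2'] at this
      simpa [ha1', hc1', hb1', hd1'] using this
    have hbd : b = d := by
      ext x
      have := congrArg A (ContinuousLinearMap.ext_iff.mp h x)
      simp only [ContinuousLinearMap.comp_apply, ContinuousLinearMap.sub_apply,
        ContinuousLinearMap.add_apply, ContinuousLinearMap.id_apply, map_sub, map_add,
        h1', h2'] at this
      have haA : ∀ y, A (a y) = 0 := fun y => by
        simpa using ContinuousLinearMap.ext_iff.mp ha2 y
      have hcA : ∀ y, A (c y) = 0 := fun y => by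
        simpa using ContinuousLinearMap.ext_iff.mp hc2 y
      have this2 := this
      simp only [haA, hcA, hb1', hd1', hb2', hd2', map_zero, sub_zero, add_zero] at this2
      exact sub_right_injective this2
    exact Prod.ext hac hbd
  · -- SurjOn
    rintro B ⟨hB1, hB2⟩
    have hB1' : ∀ x, A (B (A x)) = A x := fun x => by
      simpa using ContinuousLinearMap.ext_iff.mp hB1 x
    have hB2' : ∀ x, B (A (B x)) = B x := fun x => by
      simpa using ContinuousLinearMap.ext_iff.mp hB2 x
    refine ⟨(B ∘L A - A0 ∘L A, A ∘L A0 - A ∘L B), ⟨?_, ?_, ?_, ?_⟩, ?_⟩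
    · ext x; simp [h1', h2', hB1', hB2']
    · ext x; simp [h1', h2', hB1', hB2']
    · ext x; simp [h1', h2', hB1', hB2']
    · ext x; simp [h1', h2', hB1', hB2']
    · ext x
      simp [map_sub, map_add, h1', h2', hB1', hB2']
end

section
/- Let g : U → F be C¹ with regular value y₀ (so g'(x) is surjective for every x ∈ S = g⁻¹(y₀)) and let f : U → ℝ be C¹. If x ∈ S is a local extremum of f|_S, then the Lagrange multiplier is unique: there is exactly one continuous linear functional L ∈ F* with f'(x) = L ∘ g'(x). Moreover L = f'(x) ∘ g'(x)⁺ for every generalized inverse g'(x)⁺ of g'(x); in particular f'(x) ∘ q₁ = f'(x) ∘ q₂ for any two generalized inverses q₁, q₂ of g'(x). -/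
/-- A surjective continuous linear map between Banach spaces whose kernel is
closed-complemented admits a continuous linear right inverse. -/
lemma exists_continuous_right_inverse_of_surjective
    {E F : Type*} [NormedAddCommGroup E] [NormedSpace ℝ E] [CompleteSpace E]
    [NormedAddCommGroup F] [NormedSpace ℝ F] [CompleteSpace F]
    (T : E →L[ℝ] F) (hsurj : Function.Surjective T)
    (hker : (LinearMap.ker (T : E →ₗ[ℝ] F)).ClosedComplemented) :
    ∃ q : F →L[ℝ] E, ∀ y, T (q y) = y := by
  obtain ⟨p, hp⟩ := hker
  -- p : E →L[ℝ] ker T with p x = x for x ∈ ker T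
  set G : Submodule ℝ E := LinearMap.ker (((LinearMap.ker (T : E →ₗ[ℝ] F)).subtypeL.comp p : E →L[ℝ] E) : E →ₗ[ℝ] E) with hG
  have hGmem : ∀ v : E, v ∈ G ↔ ((p v : E) = 0) := fun v => LinearMap.mem_ker
  have hGclosed : IsClosed (G : Set E) := by
    have : Continuous ((LinearMap.ker (T : E →ₗ[ℝ] F)).subtypeL.comp p) := ContinuousLinearMap.continuous _
    exact isClosed_eq this continuous_const
  haveI : CompleteSpace G := hGclosed.completeSpace_coe
  set S : G →L[ℝ] F := T.comp G.subtypeL with hS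
  have hSinj : LinearMap.ker (S : G →ₗ[ℝ] F) = ⊥ := by
    rw [LinearMap.ker_eq_bot']
    rintro ⟨v, hv⟩ hTv
    have hvker : v ∈ LinearMap.ker (T : E →ₗ[ℝ] F) := by
      simpa [hS] using hTv
    have h1 : (p v : E) = v := congrArg Subtype.val (hp ⟨v, hvker⟩)
    have h2 : (p v : E) = 0 := (hGmem v).mp hv
    ext
    simpa using h1.symm.trans h2
  have hSsurj : LinearMap.range (S : G →ₗ[ℝ] F) = ⊤ := by
    rw [LinearMap.range_eq_top]
    intro y
    obtain ⟨v, hv⟩ := hsurj y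
    have hpv : (p v : E) ∈ LinearMap.ker (T : E →ₗ[ℝ] F) := (p v).2
    have hppv : p ((p v : E)) = p v := hp (p v)
    have hw : (v - (p v : E)) ∈ G := by
      rw [hGmem]
      have : p (v - (p v : E)) = p v - p ((p v : E)) := by
        simp [map_sub]
      rw [this, hppv]
      simp
    refine ⟨⟨v - (p v : E), hw⟩, ?_⟩
    have : T (v - (p v : E)) = T v - T ((p v : E)) := by simp [map_sub]
    have hTpv : T ((p v : E)) = 0 := hpv
    simp [hS, this, hTpv, hv]
  let e : G ≃L[ℝ] F := ContinuousLinearEquiv.ofBijective S hSinj hSsurj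
  refine ⟨G.subtypeL.comp (e.symm : F →L[ℝ] G), fun y => ?_⟩
  exact e.apply_symm_apply y

/-- Under a regular constraint the Lagrange multiplier is unique: if `y₀`
is a regular value of `g` and `x ∈ S = g⁻¹(y₀)` is a local extremum of `f|_S`, then there
is exactly one `L ∈ F*` with `f'(x) = L ∘ g'(x)`; moreover `L = f'(x) ∘ g'(x)⁺` for every
generalized inverse `g'(x)⁺`, so `f'(x) ∘ q₁ = f'(x) ∘ q₂` for any two generalized
inverses. -/
theorem lagrange_multiplier_unique_regular
    {E F : Type*} [NormedAddCommGroup E] [NormedSpace ℝ E] [CompleteSpace E]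
    [NormedAddCommGroup F] [NormedSpace ℝ F] [CompleteSpace F]
    {U : Set E} (hU : IsOpen U) {g : E → F} {f : E → ℝ} {y₀ : F}
    (hg : ContDiffOn ℝ 1 g U) (hf : ContDiffOn ℝ 1 f U)
    (hreg : ∀ z ∈ U, g z = y₀ →
      Function.Surjective (fderiv ℝ g z) ∧
      (LinearMap.ker (fderiv ℝ g z : E →ₗ[ℝ] F)).ClosedComplemented)
    {x : E} (hxU : x ∈ U) (hxS : g x = y₀)
    (hext : IsLocalExtrOn f (U ∩ g ⁻¹' {y₀}) x) :
    (∃! L : F →L[ℝ] ℝ, fderiv ℝ f x = L ∘L fderiv ℝ g x) ∧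
    (∀ q : F →L[ℝ] E,
      fderiv ℝ g x ∘L q ∘L fderiv ℝ g x = fderiv ℝ g x →
      q ∘L fderiv ℝ g x ∘L q = q →
      fderiv ℝ f x = (fderiv ℝ f x ∘L q) ∘L fderiv ℝ g x) ∧
    (∀ q₁ q₂ : F →L[ℝ] E,
      fderiv ℝ g x ∘L q₁ ∘L fderiv ℝ g x = fderiv ℝ g x →
      q₁ ∘L fderiv ℝ g x ∘L q₁ = q₁ →
      fderiv ℝ g x ∘L q₂ ∘L fderiv ℝ g x = fderiv ℝ g x →
      q₂ ∘L fderiv ℝ g x ∘L q₂ = q₂ →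
      fderiv ℝ f x ∘L q₁ = fderiv ℝ f x ∘L q₂) := by
  obtain ⟨hsurj, hker⟩ := hreg x hxU hxS
  set T := fderiv ℝ g x with hT
  set φ := fderiv ℝ f x with hφ
  -- strict derivatives
  have hgx : HasStrictFDerivAt g T x :=
    (hg.contDiffAt (hU.mem_nhds hxU)).hasStrictFDerivAt one_ne_zero
  have hfx : HasStrictFDerivAt f φ x :=
    (hf.contDiffAt (hU.mem_nhds hxU)).hasStrictFDerivAt one_ne_zero
  -- reduce the extremum set
  have hset : (U ∩ g ⁻¹' {y₀}) = U ∩ {y | g y = g x} := by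
    rw [hxS]; rfl
  have hext' : IsLocalExtrOn f {y | g y = g x} x := by
    have hnhd : nhdsWithin x (U ∩ {y | g y = g x}) = nhdsWithin x {y | g y = g x} :=
      nhdsWithin_inter_of_mem (mem_nhdsWithin_of_mem_nhds (hU.mem_nhds hxU))
    unfold IsLocalExtrOn
    rw [← hnhd]
    have := hext
    unfold IsLocalExtrOn at this
    rwa [hset] at this
  obtain ⟨Λ, Λ₀, hΛ, hfΛ⟩ := hext'.exists_linear_map_of_hasStrictFDerivAt hgx hfx
  have hΛ₀ : Λ₀ ≠ 0 := by
    intro h0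
    apply hΛ
    have hΛzero : Λ = 0 := by
      apply LinearMap.ext
      intro y
      obtain ⟨v, hv⟩ := hsurj y
      have h := hfΛ v
      rw [h0, zero_smul, add_zero] at h
      simp [← hv, h]
    simp [hΛzero, h0]
  -- φ vanishes on ker T
  have hφker : ∀ v, T v = 0 → φ v = 0 := by
    intro v hv
    have h := hfΛ v
    rw [hv, map_zero, zero_add] at h
    exact (smul_eq_zero.mp h).resolve_left hΛ₀
  obtain ⟨q₀, hq₀⟩ := exists_continuous_right_inverse_of_surjective T hsurj hker
  set L : F →L[ℝ] ℝ := φ ∘L q₀ with hL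
  have hLT : φ = L ∘L T := by
    ext v
    have hkerv : T (v - q₀ (T v)) = 0 := by
      simp [map_sub, hq₀]
    have := hφker _ hkerv
    rw [map_sub] at this
    have h : φ v = φ (q₀ (T v)) := by linarith
    simpa [hL] using h
  -- any generalized-inverse post-composition recovers L
  have hTq : ∀ q : F →L[ℝ] E, T ∘L q ∘L T = T → ∀ y, T (q y) = y := by
    intro q hq y
    obtain ⟨v, hv⟩ := hsurj y
    have := congrArg (fun (A : E →L[ℝ] F) => A v) hq
    simp only [ContinuousLinearMap.comp_apply] at this
    rw [← hv]
    exact this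
  have hqL : ∀ q : F →L[ℝ] E, T ∘L q ∘L T = T → φ ∘L q = L := by
    intro q hq
    ext y
    have h1 : T (q y) = y := hTq q hq y
    have h2 : φ (q y) = L (T (q y)) := by
      rw [hLT]; rfl
    simp only [ContinuousLinearMap.comp_apply]
    rw [h2, h1]
  refine ⟨⟨L, hLT, ?_⟩, ?_, ?_⟩
  · intro L' hL'
    ext y
    obtain ⟨v, hv⟩ := hsurj y
    have h1 := congrArg (fun (A : E →L[ℝ] ℝ) => A v) hL'
    have h2 := congrArg (fun (A : E →L[ℝ] ℝ) => A v) hLT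
    simp only [ContinuousLinearMap.comp_apply] at h1 h2
    rw [← hv]
    rw [← h1, h2]
  · intro q hq _
    rw [hqL q hq, ← hLT]
  · intro q₁ q₂ hq₁ _ hq₂ _
    rw [hqL q₁ hq₁, hqL q₂ hq₂]
end

section
/- Let A ∈ B(E,F) be double split with A not surjective (so any generalized inverse A⁺ has nontrivial kernel N(A⁺) ≠ {0}), and let φ ∈ E* be a functional vanishing on N(A) but with φ(e₀) = 1 for some e₀ ∈ E. Then there exist two generalized inverses A⁺ and B of A such that the functionals φ ∘ A⁺ and φ ∘ B in F* are distinct. (Hence the Lagrange multiplier under a non-regular constraint is not unique.) -/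
open ContinuousLinearMap

/-- If `A` is double split but not surjective, and `φ ∈ E*` vanishes on
`N(A)` with `φ(e₀) = 1` for some `e₀`, then there exist two generalized inverses `A⁺, B`
of `A` with `φ ∘ A⁺ ≠ φ ∘ B`: the Lagrange multiplier under a non-regular constraint is
not unique (ill-posed). -/
theorem lagrange_multiplier_ill_posed
    {E F : Type*} [NormedAddCommGroup E] [NormedSpace ℝ E] [CompleteSpace E]
    [NormedAddCommGroup F] [NormedSpace ℝ F] [CompleteSpace F]
    (A : E →L[ℝ] F)
    (hsplit : IsClosed (LinearMap.range (A : E →ₗ[ℝ] F) : Set F) ∧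
      (LinearMap.ker (A : E →ₗ[ℝ] F)).ClosedComplemented ∧ (LinearMap.range (A : E →ₗ[ℝ] F)).ClosedComplemented)
    (hnotsurj : ¬ Function.Surjective A)
    (φ : E →L[ℝ] ℝ) (hφ : ∀ h : E, A h = 0 → φ h = 0)
    (e₀ : E) (he₀ : φ e₀ = 1) :
    ∃ Ap B : F →L[ℝ] E,
      (A ∘L Ap ∘L A = A ∧ Ap ∘L A ∘L Ap = Ap) ∧
      (A ∘L B ∘L A = A ∧ B ∘L A ∘L B = B) ∧
      φ ∘L Ap ≠ φ ∘L B := by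
  obtain ⟨hclosed, hker, hran⟩ := hsplit
  obtain ⟨q, hq⟩ := hker
  obtain ⟨r, hr⟩ := hran
  haveI : CompleteSpace (LinearMap.range (A : E →ₗ[ℝ] F)) := hclosed.completeSpace_coe
  set P : E →L[ℝ] E := (LinearMap.ker (A : E →ₗ[ℝ] F)).subtypeL ∘L q with hP
  have hPK : ∀ x : E, A (P x) = 0 := fun x => (q x).2
  have hPid : ∀ x, A x = 0 → P x = x := by
    intro x hx
    exact congrArg Subtype.val (hq ⟨x, hx⟩)
  set N := LinearMap.ker (P : E →ₗ[ℝ] E) with hN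
  haveI : CompleteSpace N := (ContinuousLinearMap.isClosed_ker P).completeSpace_coe
  set A₂ : N →L[ℝ] LinearMap.range (A : E →ₗ[ℝ] F) :=
    ContinuousLinearMap.codRestrict (A ∘L N.subtypeL) (LinearMap.range (A : E →ₗ[ℝ] F))
      (fun x => LinearMap.mem_range_self _ _) with hA₂
  have hA₂coe : ∀ x : N, (A₂ x : F) = A (x : E) := fun x => rfl
  have hinj : LinearMap.ker (A₂ : N →ₗ[ℝ] LinearMap.range (A : E →ₗ[ℝ] F)) = ⊥ := by
    rw [Submodule.eq_bot_iff]
    intro x hx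
    have hx0 : A (x : E) = 0 := by
      have : (A₂ x : F) = 0 := congrArg Subtype.val hx
      rwa [hA₂coe] at this
    have h1 : P (x : E) = (x : E) := hPid _ hx0
    have h2 : P (x : E) = 0 := x.2
    exact Subtype.ext (h2 ▸ h1).symm
  have hsurj : LinearMap.range (A₂ : N →ₗ[ℝ] LinearMap.range (A : E →ₗ[ℝ] F)) = ⊤ := by
    rw [Submodule.eq_top_iff']
    rintro ⟨y, z, rfl⟩
    have hmem : z - P z ∈ N := by
      have : P (z - P z) = 0 := by
        have := hPid (P z) (hPK z)
        simp [map_sub, this]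
      exact this
    refine ⟨⟨z - P z, hmem⟩, ?_⟩
    apply Subtype.ext
    show A (z - P z) = A z
    simp only [map_sub]
    have : A (P z) = 0 := hPK z
    simp [this]
  set e := ContinuousLinearEquiv.ofBijective A₂ hinj hsurj with he
  set Ap : F →L[ℝ] E := N.subtypeL ∘L (e.symm : (LinearMap.range (A : E →ₗ[ℝ] F)) →L[ℝ] N) ∘L r with hAp
  have hecoe : ∀ x : N, ((e x : LinearMap.range (A : E →ₗ[ℝ] F)) : F) = A (x : E) := fun x => hA₂coe x
  have hApcoe : ∀ f : F, Ap f = ((e.symm (r f) : N) : E) := fun f => rfl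
  -- key identity 1: A (Ap g) = g for g in range A
  have key1 : ∀ g : LinearMap.range (A : E →ₗ[ℝ] F), A (Ap (g : F)) = g := by
    intro g
    rw [hApcoe, hr g]
    have := hecoe (e.symm g)
    rw [e.apply_symm_apply] at this
    exact this.symm
  have hAApA : ∀ x : E, A (Ap (A x)) = A x := fun x =>
    key1 ⟨A x, LinearMap.mem_range_self _ _⟩
  have hApAAp : ∀ f : F, Ap (A (Ap f)) = Ap f := by
    intro f
    have h1 : A (Ap f) = ((r f : LinearMap.range (A : E →ₗ[ℝ] F)) : F) := by
      rw [hApcoe]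
      have := hecoe (e.symm (r f))
      rw [e.apply_symm_apply] at this
      exact this.symm
    rw [h1, hApcoe, hApcoe, hr]
  -- Ap is a generalized inverse
  have hApgen : A ∘L Ap ∘L A = A ∧ Ap ∘L A ∘L Ap = Ap := by
    constructor
    · ext x; exact hAApA x
    · ext f; exact hApAAp f
  -- find y not in range of A ∘ Ap
  have hexf : ∃ f₀ : F, f₀ - A (Ap f₀) ≠ 0 := by
    by_contra hc
    push_neg at hc
    apply hnotsurj
    intro f
    exact ⟨Ap f, by have := hc f; rw [sub_eq_zero] at this; exact this.symm⟩
  obtain ⟨f₀, hy⟩ := hexf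
  set y := f₀ - A (Ap f₀) with hydef
  obtain ⟨g, hg1, hg2⟩ := exists_dual_vector ℝ y (norm_ne_zero_iff.mpr hy)
  set ψ : F →L[ℝ] ℝ := ‖y‖⁻¹ • g with hψ
  have hψy : ψ y = 1 := by
    rw [hψ]
    simp only [ContinuousLinearMap.smul_apply, hg2, smul_eq_mul]
    exact inv_mul_cancel₀ (norm_ne_zero_iff.mpr hy)
  set B : F →L[ℝ] E :=
    Ap + Ap ∘L ((ψ.smulRight (A e₀)) ∘L (ContinuousLinearMap.id ℝ F - A ∘L Ap)) with hB
  have hBapp : ∀ f : F, B f = Ap f + ψ (f - A (Ap f)) • Ap (A e₀) := by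
    intro f
    simp [hB, ContinuousLinearMap.smulRight_apply, map_smul, sub_smul]
  have hABA : ∀ x : E, A (B (A x)) = A x := by
    intro x
    rw [hBapp]
    have h0 : A x - A (Ap (A x)) = 0 := by rw [hAApA]; simp
    rw [h0]
    simp [hAApA x]
  have hBAB : ∀ f : F, B (A (B f)) = B f := by
    intro f
    have hABf : A (B f) = A (Ap f) + ψ (f - A (Ap f)) • A (Ap (A e₀)) := by
      rw [hBapp]; simp [map_smul]
    rw [hBapp (A (B f))]
    have hz : A (B f) - A (Ap (A (B f))) = 0 := by rw [hAApA]; simp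
    rw [hz]
    simp only [map_zero, zero_smul, add_zero]
    rw [hABf]
    simp only [map_add, map_smul]
    rw [hApAAp, hApAAp, hBapp]
  have hne : φ ∘L Ap ≠ φ ∘L B := by
    intro hc
    have h1 : φ (Ap f₀) = φ (B f₀) := congrFun (congrArg DFunLike.coe hc) f₀
    rw [hBapp, ← hydef, hψy, one_smul, map_add] at h1
    have h2 : φ (Ap (A e₀)) = 1 := by
      have hk : A (Ap (A e₀) - e₀) = 0 := by rw [map_sub, hAApA]; simp
      have := hφ _ hk
      rw [map_sub] at this
      linarith
    rw [h2] at h1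
    linarith
  exact ⟨Ap, B, hApgen, ⟨by ext x; exact hABA x, by ext f; exact hBAB f⟩, hne⟩
end

section
/- Let A ∈ B(E,F) be double split and B a generalized inverse of A with the decompositions E = N(A) ⊕ R(B) and F = R(A) ⊕ N(B). Fix another generalized inverse A⁺₀ with R₀⁺ = R(A⁺₀), N₀⁺ = N(A⁺₀). Then, setting α = P_{N(A)}^{R₀⁺} ∘ P_{R(B)}^{N(A)} restricted to R₀⁺ and β = P_{R(A)}^{N₀⁺} ∘ P_{N(B)}^{R(A)} restricted to N₀⁺, one has R(B) = { e + α(e) : e ∈ R₀⁺ } and N(B) = { d + β(d) : d ∈ N₀⁺ }. -/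
/-- Let `B` and `A⁺₀` be generalized inverses of the double split operator
`A`. With `α = P_{N(A)}^{R₀⁺} ∘ P_{R(B)}^{N(A)}` (on `E`: here `P_{R(B)}^{N(A)} = B A` and
`P_{N(A)}^{R₀⁺} = I_E − A⁺₀ A`) and `β = P_{R(A)}^{N₀⁺} ∘ P_{N(B)}^{R(A)}` (on `F`: here
`P_{N(B)}^{R(A)} = I_F − A B` and `P_{R(A)}^{N₀⁺} = A A⁺₀`), one has
`R(B) = { e + α e : e ∈ R₀⁺ }` and `N(B) = { d + β d : d ∈ N₀⁺ }`. -/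
theorem range_ker_of_generalized_inverse_as_graphs
    {E F : Type*} [NormedAddCommGroup E] [NormedSpace ℝ E] [CompleteSpace E]
    [NormedAddCommGroup F] [NormedSpace ℝ F] [CompleteSpace F]
    (A : E →L[ℝ] F) (A0 B : F →L[ℝ] E)
    (hsplit : IsClosed (LinearMap.range (A : E →ₗ[ℝ] F) : Set F) ∧
      (LinearMap.ker (A : E →ₗ[ℝ] F)).ClosedComplemented ∧ (LinearMap.range (A : E →ₗ[ℝ] F)).ClosedComplemented)
    (h1 : A ∘L A0 ∘L A = A) (h2 : A0 ∘L A ∘L A0 = A0)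
    (hB1 : A ∘L B ∘L A = A) (hB2 : B ∘L A ∘L B = B) :
    letI α : E →L[ℝ] E := (ContinuousLinearMap.id ℝ E - A0 ∘L A) ∘L (B ∘L A)
    letI β : F →L[ℝ] F := (A ∘L A0) ∘L (ContinuousLinearMap.id ℝ F - A ∘L B)
    (LinearMap.range (B : F →ₗ[ℝ] E) : Set E) = {x : E | ∃ e ∈ LinearMap.range (A0 : F →ₗ[ℝ] E), x = e + α e} ∧
    (LinearMap.ker (B : F →ₗ[ℝ] E) : Set F) = {y : F | ∃ d ∈ LinearMap.ker (A0 : F →ₗ[ℝ] E), y = d + β d} := by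

  have h1' : ∀ x, A (A0 (A x)) = A x := fun x => DFunLike.congr_fun h1 x
  have h2' : ∀ y, A0 (A (A0 y)) = A0 y := fun y => DFunLike.congr_fun h2 y
  have hB1' : ∀ x, A (B (A x)) = A x := fun x => DFunLike.congr_fun hB1 x
  have hB2' : ∀ y, B (A (B y)) = B y := fun y => DFunLike.congr_fun hB2 y
  refine ⟨?_, ?_⟩
  · ext x
    simp only [SetLike.mem_coe, LinearMap.mem_range, Set.mem_setOf_eq, ContinuousLinearMap.coe_coe,
      ContinuousLinearMap.coe_comp', Function.comp_apply, ContinuousLinearMap.coe_sub',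
      Pi.sub_apply, ContinuousLinearMap.coe_id', id_eq]
    constructor
    · rintro ⟨y, rfl⟩
      refine ⟨A0 (A (B y)), ⟨A (B y), rfl⟩, ?_⟩
      simp only [ContinuousLinearMap.comp_apply, ContinuousLinearMap.sub_apply,
        ContinuousLinearMap.id_apply, h1', hB2']
      abel
    · rintro ⟨e, ⟨f, rfl⟩, rfl⟩
      refine ⟨A (A0 f), ?_⟩
      simp only [ContinuousLinearMap.comp_apply, ContinuousLinearMap.sub_apply,
        ContinuousLinearMap.id_apply, hB1', h2']
      abel
  · ext y
    simp only [SetLike.mem_coe, LinearMap.mem_ker, Set.mem_setOf_eq, ContinuousLinearMap.coe_coe]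
    constructor
    · rintro hy
      refine ⟨y - A (A0 y), ?_, ?_⟩
      · have : A0 (y - A (A0 y)) = 0 := by
          simp [map_sub, h2']
        exact this
      · simp only [ContinuousLinearMap.comp_apply, ContinuousLinearMap.sub_apply,
          ContinuousLinearMap.id_apply, map_sub, h1', hB1', hB2', hy, map_zero]
        abel
    · rintro ⟨d, hd, rfl⟩
      simp only [ContinuousLinearMap.comp_apply, ContinuousLinearMap.sub_apply,
        ContinuousLinearMap.id_apply, map_add, map_sub, h1', hB2', hd, map_zero]
      abel
end
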